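/- Let y > 1, w > 1, f ≥ 0 with w ≥ 1 + f, and let k ≥ 1 be an integer with w^{k−1} ≤ y. Then (1 + (k−1)·(w − 1 − f)/w) / (1 + ln(y)) ≤ 1/ln(y) + (w − 1 − f)/(w · ln(w)). -/

import Mathlib

/-- Payoff-ratio bound: if the algorithm marks at `1, w, …, w^{k-1}` with `w^{k-1} ≤ y`,
then `(1 + (k-1)(w-1-f)/w)/(1 + ln y) ≤ 1/ln y + (w-1-f)/(w·ln w)`. -/
theorem stmt_12 (y w f : ℝ) (k : ℕ) (hy : 1 < y) (hw : 1 < w) (hf : 0 ≤ f)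
    (hwf : 1 + f ≤ w) (hk : 1 ≤ k) (hky : w ^ (k - 1) ≤ y) :
    (1 + ((k : ℝ) - 1) * (w - 1 - f) / w) / (1 + Real.log y) ≤
      1 / Real.log y + (w - 1 - f) / (w * Real.log w) := by
  have hL : 0 < Real.log y := Real.log_pos hy
  have hlw : 0 < Real.log w := Real.log_pos hw
  have hw0 : (0:ℝ) < w := lt_trans one_pos hw
  have hc : 0 ≤ (w - 1 - f) / w := div_nonneg (by linarith) hw0.le
  have hkL : ((k : ℝ) - 1) * Real.log w ≤ Real.log y := by
    have h1 : Real.log (w ^ (k - 1)) ≤ Real.log y :=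
      Real.log_le_log (pow_pos hw0 _) hky
    rw [Real.log_pow] at h1
    have h2 : ((k - 1 : ℕ) : ℝ) = (k : ℝ) - 1 := by
      push_cast [Nat.cast_sub hk]; ring
    rwa [h2] at h1
  set c := (w - 1 - f) / w with hcdef
  set L := Real.log y
  set lw := Real.log w
  have hrw : (1 + ((k : ℝ) - 1) * (w - 1 - f) / w) = 1 + ((k:ℝ) - 1) * c := by
    rw [hcdef]; ring
  have hrw2 : (w - 1 - f) / (w * lw) = c / lw := by
    rw [hcdef]; field_simp
  rw [hrw, hrw2]
  rw [div_le_iff₀ (by linarith : (0:ℝ) < 1 + L)]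
  have key : ((k:ℝ) - 1) * c * lw ≤ L * c := by
    calc ((k:ℝ) - 1) * c * lw = (((k:ℝ) - 1) * lw) * c := by ring
    _ ≤ L * c := mul_le_mul_of_nonneg_right hkL hc
  have e1 : (1 / L + c / lw) * (1 + L) = 1/L + 1 + c/lw + (c * L)/lw := by
    field_simp; ring
  rw [e1]
  have h3 : ((k:ℝ) - 1) * c ≤ (c * L) / lw := by
    rw [le_div_iff₀ hlw]; nlinarith
  have h4 : 0 < 1/L := by positivity
  have h5 : 0 ≤ c/lw := div_nonneg hc hlw.le
  linarith
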